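/- arXiv:1905.02233 — 3 statements merged into one kernel-verified Lean document; each statement's English description precedes it below -/
import Mathlib

section
/- Let 1 ≤ m < n with α = m/n, and let i be an integer with 1 ≤ i ≤ √m − 1 and θ ∈ (0,2π]. Then ∫_{A_{i,θ}} m·f_α(z) dλ(z) = i² + (θ/(2π))(2i+1), where λ is Lebesgue measure on ℂ; equivalently, m·μ_α(A_{i,θ}) = i² + (θ/(2π))(2i+1). -/
open MeasureTheory Matrix Finset

noncomputable section

instance (n : ℕ) : MeasurableSpace (Matrix (Fin n) (Fin n) ℂ) :=
  inferInstanceAs (MeasurableSpace (Fin n → Fin n → ℂ))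

/-- The top-left `m × m` block of an `n × n` unitary matrix. -/
def truncation (n m : ℕ) (h : m ≤ n) (U : Matrix.unitaryGroup (Fin n) ℂ) :
    Matrix (Fin m) (Fin m) ℂ :=
  Matrix.of fun i j => (U : Matrix (Fin n) (Fin n) ℂ) (Fin.castLE h i) (Fin.castLE h j)

/-- The eigenvalues (with multiplicity) of the truncation. -/
def eigs (n m : ℕ) (h : m ≤ n) (U : Matrix.unitaryGroup (Fin n) ℂ) : Multiset ℂ :=
  ((truncation n m h U).charpoly).roots

open Classical in
/-- The number of elements of a multiset (with multiplicity) lying in a set `A`. -/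
def countIn (s : Multiset ℂ) (A : Set ℂ) : ℕ :=
  Multiset.card (s.filter fun z => z ∈ A)

/-- `r_i = i / sqrt (n - m + i²)`. -/
def rr (n m i : ℕ) : ℝ := i / Real.sqrt ((n : ℝ) - m + (i : ℝ) ^ 2)

/-- The argument of a complex number, normalized to take values in `(0, 2π]`. -/
def argIn (z : ℂ) : ℝ :=
  if Complex.arg z ≤ 0 then Complex.arg z + 2 * Real.pi else Complex.arg z

/-- The set `A_{i,θ}`. -/
def Aiθ (n m i : ℕ) (θ : ℝ) : Set ℂ :=
  {z | ‖z‖ < rr n m i} ∪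
    {z | rr n m i ≤ ‖z‖ ∧ ‖z‖ < rr n m (i + 1) ∧
      0 < argIn z ∧ argIn z < θ}

/-- The eigenvalue counting function `N_{i,θ}`. -/
def NN (n m : ℕ) (h : m ≤ n) (i : ℕ) (θ : ℝ) (U : Matrix.unitaryGroup (Fin n) ℂ) : ℕ :=
  countIn (eigs n m h U) (Aiθ n m i θ)

/-- `ε_m = sqrt (2 log (m+1) / m)`. -/
def epsm (m : ℕ) : ℝ := Real.sqrt (2 * Real.log ((m : ℝ) + 1) / m)

/-- The density `f_α(z) = (1-α)/(πα(1-|z|²)²)` for `0 < |z| < √α`, and `0` otherwise. -/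
def fα (α : ℝ) (z : ℂ) : ℝ :=
  if 0 < ‖z‖ ∧ ‖z‖ < Real.sqrt α then
    (1 - α) / (Real.pi * α * (1 - ‖z‖ ^ 2) ^ 2)
  else 0

/-- The measure `μ_α` on `ℂ` with density `f_α` with respect to Lebesgue measure. -/
def μα (α : ℝ) : Measure ℂ :=
  volume.withDensity fun z => ENNReal.ofReal (fα α z)
open Real in
lemma radial_int (C a b : ℝ) (h0 : 0 ≤ a) (hab : a ≤ b) (hb : b < 1) :
    ∫ r in Set.Ioo a b, C * (r / (1 - r ^ 2) ^ 2)
      = C * ((2 * (1 - b ^ 2))⁻¹ - (2 * (1 - a ^ 2))⁻¹) := by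
  have hne : ∀ x ∈ Set.uIcc a b, (1 - x ^ 2) ≠ 0 := by
    intro x hx
    rw [Set.uIcc_of_le hab] at hx
    have h1 : x < 1 := lt_of_le_of_lt hx.2 hb
    have h2 : 0 ≤ x := le_trans h0 hx.1
    nlinarith
  have hderiv : ∀ x ∈ Set.uIcc a b,
      HasDerivAt (fun r => C * (2 * (1 - r ^ 2))⁻¹) (C * (x / (1 - x ^ 2) ^ 2)) x := by
    intro x hx
    have h1 : HasDerivAt (fun r : ℝ => 2 * (1 - r ^ 2)) (2 * -(2 * x)) x := by
      have := (((hasDerivAt_pow 2 x).const_sub 1).const_mul 2)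
      refine this.congr_deriv ?_
      simp
    have h2 := (h1.inv (by have := hne x hx; intro h; apply this; linarith)).const_mul C
    refine h2.congr_deriv ?_
    have := hne x hx
    field_simp
  have hint : IntervalIntegrable (fun r => C * (r / (1 - r ^ 2) ^ 2)) volume a b := by
    apply ContinuousOn.intervalIntegrable
    apply ContinuousOn.mul continuousOn_const
    apply ContinuousOn.div continuousOn_id
    · exact ((continuousOn_const.sub (continuousOn_pow 2)).pow 2)
    · intro x hx
      exact pow_ne_zero 2 (hne x hx)
  have key := intervalIntegral.integral_eq_sub_of_hasDerivAt hderiv hint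
  rw [Measure.restrict_congr_set Ioo_ae_eq_Ioc, ← intervalIntegral.integral_of_le hab, key]
  ring

lemma measurable_argIn : Measurable argIn := by
  unfold argIn
  exact Measurable.ite (measurableSet_le Complex.measurable_arg measurable_const)
    (Complex.measurable_arg.add_const _) Complex.measurable_arg

lemma measurableSet_Aiθ (n m i : ℕ) (θ : ℝ) : MeasurableSet (Aiθ n m i θ) := by
  have hm1 : Measurable (fun z : ℂ => ‖z‖) := measurable_norm
  exact ((measurableSet_lt hm1 measurable_const).union
    ((measurableSet_le measurable_const hm1).inter
      ((measurableSet_lt hm1 measurable_const).inter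
        ((measurableSet_lt measurable_const measurable_argIn).inter
          (measurableSet_lt measurable_argIn measurable_const)))))

lemma measurable_fα (α : ℝ) : Measurable (fα α) := by
  have hm1 : Measurable (fun z : ℂ => ‖z‖) := measurable_norm
  unfold fα
  refine Measurable.ite ?_ ?_ measurable_const
  · exact (measurableSet_lt measurable_const hm1).inter (measurableSet_lt hm1 measurable_const)
  · exact Measurable.div measurable_const
      ((measurable_const.sub (hm1.pow_const 2)).pow_const 2 |>.const_mul _)

open Real in
/-- The integral of a function that looks like `C/(1-|z|²)²` over `Aiθ`. -/
lemma aux_integral (g : ℂ → ℝ) (n m i : ℕ) (θ C a b : ℝ)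
    (haa : a = rr n m i) (hbb : b = rr n m (i + 1))
    (ha0 : 0 < a) (hab : a < b) (hb1 : b < 1)
    (hθ0 : 0 < θ) (hθ1 : θ ≤ 2 * π)
    (hg : ∀ z : ℂ, 0 < ‖z‖ → ‖z‖ < b →
      g z = C * (1 / (1 - ‖z‖ ^ 2) ^ 2)) :
    ∫ z in Aiθ n m i θ, g z
      = (C * ((2 * (1 - a ^ 2))⁻¹ - (2 * (1 - (0:ℝ) ^ 2))⁻¹)) * (2 * π)
        + (C * ((2 * (1 - b ^ 2))⁻¹ - (2 * (1 - a ^ 2))⁻¹)) * θ := by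
  have hA : MeasurableSet (Aiθ n m i θ) := measurableSet_Aiθ n m i θ
  set T : Set ℝ := Set.Ioo 0 (min θ π) ∪ Set.Ioo (-π) (θ - 2 * π) with hT
  set S1 : Set (ℝ × ℝ) := Set.Ioo (0:ℝ) a ×ˢ Set.Ioo (-π) π with hS1def
  set S2 : Set (ℝ × ℝ) := Set.Ico a b ×ˢ T with hS2def
  set h : ℝ × ℝ → ℝ := fun p => C * (p.1 / (1 - p.1 ^ 2) ^ 2) with hhdef
  have hS1 : MeasurableSet S1 := measurableSet_Ioo.prod measurableSet_Ioo
  have hTm : MeasurableSet T := measurableSet_Ioo.union measurableSet_Ioo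
  have hS2 : MeasurableSet S2 := measurableSet_Ico.prod hTm
  -- the pointwise identity on the polar target
  have hcong : Set.EqOn (fun p : ℝ × ℝ => p.1 • (Aiθ n m i θ).indicator g (Complex.polarCoord.symm p))
      ((S1 ∪ S2).indicator h) polarCoord.target := by
    rintro ⟨r, φ⟩ hp
    dsimp only
    rw [polarCoord_target] at hp
    obtain ⟨hr, hφ⟩ := hp
    simp only [Set.mem_Ioi] at hr
    simp only [Set.mem_Ioo] at hφ
    set z := Complex.polarCoord.symm (r, φ) with hz
    have habs : ‖z‖ = r := by
      rw [hz, Complex.norm_polarCoord_symm]; exact abs_of_pos hr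
    have harg : Complex.arg z = φ := by
      have h1 : (r, φ) ∈ Complex.polarCoord.target := by
        rw [Complex.polarCoord_target]; exact ⟨hr, hφ⟩
      have h2 := Complex.polarCoord.right_inv h1
      rw [Complex.polarCoord_apply] at h2
      exact congrArg Prod.snd h2
    have hargIn : argIn z = if φ ≤ 0 then φ + 2 * π else φ := by
      rw [argIn, harg]
    have hang : (0 < argIn z ∧ argIn z < θ) ↔ φ ∈ T := by
      constructor
      · rintro ⟨h1, h2⟩
        by_cases hc : φ ≤ 0
        · rw [hargIn, if_pos hc] at h1 h2
          exact Or.inr ⟨hφ.1, by linarith⟩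
        · rw [hargIn, if_neg hc] at h1 h2
          exact Or.inl ⟨h1, lt_min h2 hφ.2⟩
      · rintro (⟨u1, u2⟩ | ⟨u1, u2⟩)
        · rw [hargIn, if_neg (not_le.mpr u1)]
          exact ⟨u1, lt_of_lt_of_le u2 (min_le_left _ _)⟩
        · have hc : φ ≤ 0 := by linarith
          rw [hargIn, if_pos hc]
          constructor <;> linarith [Real.pi_pos]
    have hmem : z ∈ Aiθ n m i θ ↔ (r, φ) ∈ S1 ∪ S2 := by
      rw [Aiθ, ← haa, ← hbb]
      simp only [Set.mem_union, Set.mem_setOf_eq, habs, hS1def, hS2def, Set.mem_prod,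
        Set.mem_Ioo, Set.mem_Ico]
      constructor
      · rintro (h1 | ⟨h1, h2, h3, h4⟩)
        · exact Or.inl ⟨⟨hr, h1⟩, hφ⟩
        · exact Or.inr ⟨⟨h1, h2⟩, hang.mp ⟨h3, h4⟩⟩
      · rintro (⟨⟨_, h1⟩, _⟩ | ⟨⟨h1, h2⟩, h3⟩)
        · exact Or.inl h1
        · exact Or.inr ⟨h1, h2, (hang.mpr h3).1, (hang.mpr h3).2⟩
    by_cases hzA : z ∈ Aiθ n m i θ
    · rw [Set.indicator_of_mem hzA, Set.indicator_of_mem (hmem.mp hzA)]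
      have hrb : r < b := by
        rcases hmem.mp hzA with hmem1 | hmem2
        · exact lt_trans hmem1.1.2 hab
        · exact hmem2.1.2
      have := hg z (by rw [habs]; exact hr) (by rw [habs]; exact hrb)
      rw [this, habs, smul_eq_mul, hhdef]
      ring
    · rw [Set.indicator_of_notMem hzA, Set.indicator_of_notMem (fun hc => hzA (hmem.mpr hc)),
        smul_zero]
  -- integrability
  have hcont : ∀ c d : ℝ, 0 ≤ c → d < 1 →
      IntegrableOn (fun r : ℝ => C * (r / (1 - r ^ 2) ^ 2)) (Set.Icc c d) := by
    intro c d hc hd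
    apply ContinuousOn.integrableOn_compact isCompact_Icc
    apply ContinuousOn.mul continuousOn_const
    apply ContinuousOn.div continuousOn_id
    · exact ((continuousOn_const.sub (continuousOn_pow 2)).pow 2)
    · intro x hx
      have : x < 1 := lt_of_le_of_lt hx.2 hd
      have : 0 ≤ x := le_trans hc hx.1
      apply pow_ne_zero
      nlinarith [hx.2, hx.1]
  have hTfin : volume T < ⊤ :=
    lt_of_le_of_lt (measure_union_le _ _)
      (ENNReal.add_lt_top.mpr ⟨measure_Ioo_lt_top, measure_Ioo_lt_top⟩)
  have hint1 : IntegrableOn h S1 := by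
    have hf : IntegrableOn (fun r : ℝ => C * (r / (1 - r ^ 2) ^ 2)) (Set.Ioo 0 a) :=
      (hcont 0 a le_rfl (hab.trans hb1)).mono_set Set.Ioo_subset_Icc_self
    have hg1 : IntegrableOn (fun _ : ℝ => (1:ℝ)) (Set.Ioo (-π) π) :=
      integrableOn_const measure_Ioo_lt_top.ne
    have hmul := hf.mul_prod hg1
    rw [Measure.prod_restrict] at hmul
    rw [IntegrableOn, hS1def, Measure.volume_eq_prod]
    simpa [hhdef] using hmul
  have hint2 : IntegrableOn h S2 := by
    have hf : IntegrableOn (fun r : ℝ => C * (r / (1 - r ^ 2) ^ 2)) (Set.Ico a b) :=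
      (hcont a b ha0.le hb1).mono_set Set.Ico_subset_Icc_self
    have hg1 : IntegrableOn (fun _ : ℝ => (1:ℝ)) T :=
      integrableOn_const hTfin.ne
    have hmul := hf.mul_prod hg1
    rw [Measure.prod_restrict] at hmul
    rw [IntegrableOn, hS2def, Measure.volume_eq_prod]
    simpa [hhdef] using hmul
  have hdisj : Disjoint S1 S2 := by
    rw [Set.disjoint_left]
    rintro ⟨r, φ⟩ ⟨⟨_, h1⟩, _⟩ ⟨⟨h2, _⟩, _⟩
    exact absurd h1 (not_lt.mpr h2)
  have hsub : S1 ∪ S2 ⊆ polarCoord.target := by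
    rw [polarCoord_target]
    apply Set.union_subset
    · exact Set.prod_mono (fun x hx => hx.1) le_rfl
    · apply Set.prod_mono
      · exact fun x hx => lt_of_lt_of_le ha0 hx.1
      · rintro x (⟨h1, h2⟩ | ⟨h1, h2⟩)
        · exact ⟨by linarith [Real.pi_pos], lt_of_lt_of_le h2 (min_le_right _ _)⟩
        · exact ⟨h1, by linarith [Real.pi_pos]⟩
  -- angular integrals
  have hang1 : ∫ _ in Set.Ioo (-π) π, (1:ℝ) = 2 * π := by
    rw [setIntegral_const, measureReal_def, Real.volume_Ioo, smul_eq_mul, mul_one,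
      ENNReal.toReal_ofReal (by linarith [Real.pi_pos])]
    ring
  have hangT : ∫ _ in T, (1:ℝ) = θ := by
    rw [setIntegral_const, measureReal_def, smul_eq_mul, mul_one]
    have hd : Disjoint (Set.Ioo 0 (min θ π)) (Set.Ioo (-π) (θ - 2 * π)) := by
      rw [Set.disjoint_left]
      rintro x ⟨hx1, _⟩ ⟨_, hx2⟩
      linarith
    rw [hT, measure_union hd measurableSet_Ioo, Real.volume_Ioo, Real.volume_Ioo]
    rcases le_or_gt θ π with hc | hc
    · rw [min_eq_left hc, ENNReal.ofReal_eq_zero.mpr (by linarith : θ - 2 * π - -π ≤ 0),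
        add_zero, ENNReal.toReal_ofReal (by linarith)]
      ring
    · rw [min_eq_right hc.le, ← ENNReal.ofReal_add (by linarith [Real.pi_pos]) (by linarith),
        ENNReal.toReal_ofReal (by linarith [Real.pi_pos])]
      ring
  -- put it together
  rw [← integral_indicator hA, ← Complex.integral_comp_polarCoord_symm,
    setIntegral_congr_fun polarCoord.open_target.measurableSet hcong,
    setIntegral_indicator (hS1.union hS2), Set.inter_eq_right.mpr hsub,
    setIntegral_union hdisj hS2 hint1 hint2]
  have e1 : ∫ p in S1, h p
      = (∫ r in Set.Ioo (0:ℝ) a, C * (r / (1 - r ^ 2) ^ 2)) * (2 * π) := by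
    calc ∫ p in S1, h p
        = ∫ p in S1, (fun r : ℝ => C * (r / (1 - r ^ 2) ^ 2)) p.1 * (fun _ : ℝ => (1:ℝ)) p.2 := by
          simp [hhdef]
      _ = _ := by
          rw [hS1def, Measure.volume_eq_prod,
            setIntegral_prod_mul (fun r : ℝ => C * (r / (1 - r ^ 2) ^ 2)) (fun _ : ℝ => (1:ℝ))
              (Set.Ioo (0:ℝ) a) (Set.Ioo (-π) π), hang1]
  have e2 : ∫ p in S2, h p
      = (∫ r in Set.Ioo a b, C * (r / (1 - r ^ 2) ^ 2)) * θ := by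
    calc ∫ p in S2, h p
        = ∫ p in S2, (fun r : ℝ => C * (r / (1 - r ^ 2) ^ 2)) p.1 * (fun _ : ℝ => (1:ℝ)) p.2 := by
          simp [hhdef]
      _ = (∫ r in Set.Ico a b, C * (r / (1 - r ^ 2) ^ 2)) * θ := by
          rw [hS2def, Measure.volume_eq_prod,
            setIntegral_prod_mul (fun r : ℝ => C * (r / (1 - r ^ 2) ^ 2)) (fun _ : ℝ => (1:ℝ))
              (Set.Ico a b) T, hangT]
      _ = _ := by
          rw [← Measure.restrict_congr_set Ioo_ae_eq_Ico]
  rw [e1, e2, radial_int C 0 a le_rfl ha0.le (hb1.trans_le' hab.le),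
    radial_int C a b ha0.le hab.le hb1]

set_option maxHeartbeats 1000000 in
theorem stmt10 (n m : ℕ) (hm : 1 ≤ m) (hmn : m < n)
    (i : ℕ) (hi1 : 1 ≤ i) (hi2 : (i : ℝ) ≤ Real.sqrt m - 1)
    (θ : ℝ) (hθ0 : 0 < θ) (hθ1 : θ ≤ 2 * Real.pi) :
    (∫ z in Aiθ n m i θ, (m : ℝ) * fα ((m : ℝ) / n) z ∂volume)
        = (i : ℝ) ^ 2 + θ / (2 * Real.pi) * (2 * (i : ℝ) + 1) ∧
    (m : ℝ) * (μα ((m : ℝ) / n) (Aiθ n m i θ)).toReal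
        = (i : ℝ) ^ 2 + θ / (2 * Real.pi) * (2 * (i : ℝ) + 1) := by
  have hπ := Real.pi_pos
  have hmn' : (m:ℝ) < n := by exact_mod_cast hmn
  have hm' : (1:ℝ) ≤ m := by exact_mod_cast hm
  have hi' : (1:ℝ) ≤ i := by exact_mod_cast hi1
  have hn0 : (0:ℝ) < n := by linarith
  have hνpos : (0:ℝ) < (n:ℝ) - m := by linarith
  have hd1 : (0:ℝ) < (n:ℝ) - m + (i:ℝ) ^ 2 := by positivity
  have hd2 : (0:ℝ) < (n:ℝ) - m + ((i:ℝ) + 1) ^ 2 := by positivity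
  have hrrb : rr n m (i+1) = ((i:ℝ)+1) / Real.sqrt ((n:ℝ) - m + ((i:ℝ)+1) ^ 2) := by
    rw [rr]; push_cast; ring_nf
  have ha2 : (rr n m i) ^ 2 = (i:ℝ) ^ 2 / ((n:ℝ) - m + (i:ℝ) ^ 2) := by
    rw [rr, div_pow, Real.sq_sqrt hd1.le]
  have hb2 : (rr n m (i+1)) ^ 2 = ((i:ℝ)+1) ^ 2 / ((n:ℝ) - m + ((i:ℝ)+1) ^ 2) := by
    rw [hrrb, div_pow, Real.sq_sqrt hd2.le]
  have h1a : 1 - (rr n m i) ^ 2 = ((n:ℝ) - m) / ((n:ℝ) - m + (i:ℝ) ^ 2) := by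
    rw [ha2]; field_simp; ring
  have h1b : 1 - (rr n m (i+1)) ^ 2 = ((n:ℝ) - m) / ((n:ℝ) - m + ((i:ℝ)+1) ^ 2) := by
    rw [hb2]; field_simp; ring
  have ha0 : 0 < rr n m i := by
    rw [rr]; positivity
  have hb0 : 0 < rr n m (i+1) := by
    rw [hrrb]; positivity
  have hb1 : rr n m (i+1) < 1 := by
    have h2 : (rr n m (i+1)) ^ 2 < 1 := by
      rw [hb2, div_lt_one hd2]; linarith
    have h2' : (rr n m (i+1)) ^ 2 < 1 ^ 2 := by rw [one_pow]; exact h2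
    exact lt_of_pow_lt_pow_left₀ 2 zero_le_one h2'
  have hab : rr n m i < rr n m (i+1) := by
    have h2 : (rr n m i) ^ 2 < (rr n m (i+1)) ^ 2 := by
      rw [ha2, hb2, div_lt_div_iff₀ hd1 hd2]; nlinarith
    exact lt_of_pow_lt_pow_left₀ 2 hb0.le h2
  have hsqm : ((i:ℝ) + 1) ^ 2 ≤ m := by
    have h1 : (i:ℝ) + 1 ≤ Real.sqrt m := by linarith
    have h2 := Real.sq_sqrt (show (0:ℝ) ≤ m by positivity)
    nlinarith [Real.sqrt_nonneg (m:ℝ)]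
  have hbα : rr n m (i+1) ≤ Real.sqrt ((m:ℝ)/n) := by
    rw [show rr n m (i+1) = Real.sqrt ((rr n m (i+1)) ^ 2) from (Real.sqrt_sq hb0.le).symm]
    apply Real.sqrt_le_sqrt
    rw [hb2, div_le_div_iff₀ hd2 hn0]
    nlinarith
  have hgval : ∀ z : ℂ, 0 < ‖z‖ → ‖z‖ < rr n m (i+1) →
      (m:ℝ) * fα ((m:ℝ)/n) z = (((n:ℝ) - m) / Real.pi) * (1 / (1 - ‖z‖ ^ 2) ^ 2) := by
    intro z h0 hzb
    have hzα : ‖z‖ < Real.sqrt ((m:ℝ)/n) := lt_of_lt_of_le hzb hbα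
    have hz1 : ‖z‖ < 1 := lt_of_lt_of_le hzb hb1.le
    have hD : (1 - ‖z‖ ^ 2) ≠ 0 := by nlinarith
    rw [fα, if_pos ⟨h0, hzα⟩]
    have hm0 : (m:ℝ) ≠ 0 := by linarith
    have hn0' : (n:ℝ) ≠ 0 := hn0.ne'
    field_simp
  have E := aux_integral (fun z => (m:ℝ) * fα ((m:ℝ)/n) z) n m i θ (((n:ℝ) - m) / Real.pi)
    (rr n m i) (rr n m (i+1)) rfl rfl ha0 hab hb1 hθ0 hθ1 hgval
  have key : (∫ z in Aiθ n m i θ, (m : ℝ) * fα ((m : ℝ) / n) z ∂volume)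
      = (i : ℝ) ^ 2 + θ / (2 * Real.pi) * (2 * (i : ℝ) + 1) := by
    rw [E, h1a, h1b]
    have hπ0 : Real.pi ≠ 0 := hπ.ne'
    field_simp
    ring
  refine ⟨key, ?_⟩
  have hA : MeasurableSet (Aiθ n m i θ) := measurableSet_Aiθ n m i θ
  have hfnn : ∀ z : ℂ, 0 ≤ fα ((m:ℝ)/n) z := by
    intro z
    rw [fα]
    split_ifs with hc
    · have hα1 : (m:ℝ)/n ≤ 1 := by
        rw [div_le_one hn0]; linarith
      have hα0 : (0:ℝ) < (m:ℝ)/n := by positivity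
      apply div_nonneg (by linarith)
      positivity
    · exact le_rfl
  have hfm := (measurable_fα ((m:ℝ)/n)).aestronglyMeasurable (μ := volume.restrict (Aiθ n m i θ))
  have hlint := integral_eq_lintegral_of_nonneg_ae (μ := volume.restrict (Aiθ n m i θ))
    (Filter.Eventually.of_forall hfnn) hfm
  rw [μα, withDensity_apply _ hA, ← hlint, ← integral_const_mul]
  exact key
end
end

section
/- Let 3 ≤ m < n with α = m/n, set ε = √(2 log(m+1)/m), and assume ε < 1. Then for every real x with 0 ≤ x ≤ α(1-ε), (1-x)^{n-m+1}·∑_{p=m}^{∞} ((n-m+1)_p / p!)·x^p ≤ exp( αε − log(m+1) ) = e^{αε}/(m+1). -/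
open Finset

noncomputable section

/-- The rising Pochhammer symbol `(a)_p = a(a+1)⋯(a+p-1)`, with `(a)_0 = 1`. -/
def poch (a : ℝ) (p : ℕ) : ℝ := (ascPochhammer ℝ p).eval a

lemma one_sub_mul_exp_le_aux15 {s : ℝ} (hs : 0 ≤ s) :
    (1 - s) * Real.exp (s + s^2/2) ≤ 1 := by
  set f : ℝ → ℝ := fun z => (1 - z) * Real.exp (z + z^2/2) with hf
  have hd : ∀ y : ℝ, HasDerivAt f (-(y^2) * Real.exp (y + y^2/2)) y := by
    intro y
    have h1 : HasDerivAt (fun z : ℝ => z + z^2/2) (1 + y) y := by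
      have h2 := (hasDerivAt_id y).add ((hasDerivAt_pow 2 y).div_const 2)
      exact h2.congr_deriv (by norm_num)
    have hE : HasDerivAt (fun z : ℝ => Real.exp (z + z^2/2))
        ((1+y) * Real.exp (y + y^2/2)) y := by
      simpa [mul_comm] using h1.exp
    have hL : HasDerivAt (fun z : ℝ => 1 - z) (-1) y := by
      simpa using (hasDerivAt_id y).const_sub 1
    have := hL.mul hE
    exact this.congr_deriv (by ring)
  have mono : AntitoneOn f (Set.Ici (0:ℝ)) := by
    apply antitoneOn_of_deriv_nonpos (convex_Ici 0)
    · exact Continuous.continuousOn (by fun_prop)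
    · intro y _
      exact (hd y).differentiableAt.differentiableWithinAt
    · intro y _
      rw [(hd y).deriv]
      have := Real.exp_pos (y + y^2/2)
      nlinarith [sq_nonneg y]
  have h := mono Set.self_mem_Ici hs hs
  simpa [f] using h

lemma log_one_sub_le_aux15 {t : ℝ} (h0 : 0 ≤ t) (h1 : t < 1) :
    Real.log (1 - t) ≤ -t - t^2/2 := by
  rw [Real.log_le_iff_le_exp (by linarith)]
  have key := one_sub_mul_exp_le_aux15 h0
  have h2 : (1 - t) = (1-t) * Real.exp (t + t^2/2) * Real.exp (-t - t^2/2) := by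
    rw [mul_assoc, ← Real.exp_add, show (t + t^2/2) + (-t - t^2/2) = 0 by ring,
      Real.exp_zero, mul_one]
  rw [h2]
  calc (1-t) * Real.exp (t + t^2/2) * Real.exp (-t - t^2/2)
      ≤ 1 * Real.exp (-t - t^2/2) :=
        mul_le_mul_of_nonneg_right key (Real.exp_pos _).le
    _ = Real.exp (-t - t^2/2) := one_mul _

lemma poch_div_factorial_aux15 (k q : ℕ) :
    poch ((k + 1 : ℕ) : ℝ) q / (Nat.factorial q : ℝ) = ((q + k).choose k : ℝ) := by
  have h1 : poch ((k + 1 : ℕ) : ℝ) q = ((k+1).ascFactorial q : ℝ) := by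
    rw [poch, ← Nat.cast_ascFactorial]
  rw [h1, Nat.ascFactorial_eq_factorial_mul_choose, Nat.add_comm k q,
    Nat.choose_symm_add]
  push_cast
  rw [mul_comm, mul_div_assoc, div_self (by positivity), mul_one]

set_option maxHeartbeats 1000000 in
theorem stmt15 (n m : ℕ) (hm : 3 ≤ m) (hmn : m < n)
    (ε : ℝ) (hε : ε = Real.sqrt (2 * Real.log ((m : ℝ) + 1) / m)) (hε1 : ε < 1)
    (x : ℝ) (hx0 : 0 ≤ x) (hx1 : x ≤ ((m : ℝ) / n) * (1 - ε)) :
    (1 - x) ^ (n - m + 1) *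
        ∑' p : ℕ, poch ((n : ℝ) - m + 1) (m + p) / (Nat.factorial (m + p)) * x ^ (m + p)
      ≤ Real.exp (((m : ℝ) / n) * ε - Real.log ((m : ℝ) + 1)) := by
  have hmn' : m ≤ n := hmn.le
  have hM3 : (3:ℝ) ≤ (m:ℝ) := by exact_mod_cast hm
  have hMpos : (0:ℝ) < m := by linarith
  have hNM : (m:ℝ) + 1 ≤ n := by exact_mod_cast hmn
  have hNpos : (0:ℝ) < n := by linarith
  set k := n - m with hk
  have hkc : ((k:ℕ):ℝ) = (n:ℝ) - m := by
    rw [hk]; exact Nat.cast_sub hmn'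
  have hcast : ((n : ℝ) - m + 1) = ((k + 1 : ℕ) : ℝ) := by push_cast [hkc]; ring
  -- epsilon facts
  have hlog_pos : 0 < Real.log ((m:ℝ)+1) := Real.log_pos (by linarith)
  have hεarg : 0 < 2 * Real.log ((m:ℝ)+1) / m := by positivity
  have hε0 : 0 < ε := by rw [hε]; exact Real.sqrt_pos.mpr hεarg
  have hε2 : ε^2 = 2 * Real.log ((m:ℝ)+1) / m := by
    rw [hε, Real.sq_sqrt hεarg.le]
  have hlogeq : Real.log ((m:ℝ)+1) = m * ε^2 / 2 := by
    rw [hε2]; field_simp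
  -- u
  set u : ℝ := m / (n+1) with hu
  have hu0 : 0 < u := by positivity
  have hu1 : u < 1 := by rw [hu, div_lt_one (by linarith)]; linarith
  have h1u : 0 < 1 - u := by linarith
  -- ε > 1/(n+1)
  have hεn : 1 / ((n:ℝ)+1) < ε := by
    have h2 : Real.log 2 ≤ Real.log ((m:ℝ)+1) := Real.log_le_log (by norm_num) (by linarith)
    have hl2 : (0.6931471803 : ℝ) < Real.log 2 := Real.log_two_gt_d9
    have hsq : (1/((n:ℝ)+1))^2 < ε^2 := by
      rw [hε2]
      have hA : (1/((n:ℝ)+1))^2 < 1/(m:ℝ) := by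
        rw [div_pow, one_pow, div_lt_div_iff₀ (by positivity) hMpos]
        nlinarith
      have hB : 1/(m:ℝ) < 2 * Real.log ((m:ℝ)+1)/m := by
        rw [div_lt_div_iff₀ hMpos hMpos]
        nlinarith
      linarith
    exact lt_of_pow_lt_pow_left₀ 2 hε0.le hsq
  have h1εN : 1 ≤ ε * ((n:ℝ)+1) := by
    rw [div_lt_iff₀ (by linarith : (0:ℝ) < (n:ℝ)+1)] at hεn
    linarith
  -- x ≤ x0 ≤ u
  have hx0u : ((m:ℝ)/n)*(1-ε) ≤ u := by
    rw [hu, div_mul_eq_mul_div, div_le_div_iff₀ hNpos (by linarith)]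
    nlinarith [mul_le_mul_of_nonneg_left h1εN hMpos.le]
  have hxu : x ≤ u := hx1.trans hx0u
  have hx_lt1 : x < 1 := lt_of_le_of_lt hxu hu1
  have h1x : 0 ≤ 1 - x := by linarith
  -- rewrite the summand
  have hsummand : ∀ p : ℕ, poch ((n:ℝ)-m+1) (m+p) / (Nat.factorial (m+p) : ℝ) * x^(m+p)
      = ((m+p+k).choose k : ℝ) * x^(m+p) := by
    intro p
    rw [hcast, poch_div_factorial_aux15]
  rw [tsum_congr hsummand]
  -- zero case
  rcases hx0.eq_or_lt with h0 | hxpos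
  · have hz : ∀ p : ℕ, ((m+p+k).choose k : ℝ) * x^(m+p) = 0 := by
      intro p
      rw [← h0, zero_pow (by omega), mul_zero]
    rw [tsum_congr hz, tsum_zero, mul_zero]
    exact (Real.exp_pos _).le
  -- positive case: series bound
  have h1x' : 0 < 1 - x := by
    rcases lt_or_eq_of_le hxu with h | h
    · linarith
    · linarith [hu1]
  have hnorm : ‖u‖ < 1 := by rw [Real.norm_eq_abs, abs_of_pos hu0]; exact hu1
  have hfull : HasSum (fun q : ℕ => ((q + k).choose k : ℝ) * u ^ q) (1 / (1-u)^(k+1)) :=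
    hasSum_choose_mul_geometric_of_norm_lt_one k hnorm
  have hshift : Summable (fun p : ℕ => ((m+p+k).choose k : ℝ) * u^(m+p)) :=
    hfull.summable.comp_injective (add_right_injective m)
  have hterm : ∀ p : ℕ, ((m+p+k).choose k : ℝ) * x^(m+p)
      ≤ (x/u)^m * (((m+p+k).choose k : ℝ) * u^(m+p)) := by
    intro p
    have ha : (0:ℝ) ≤ ((m+p+k).choose k : ℝ) := Nat.cast_nonneg _
    have hxp : x^(m+p) ≤ (x/u)^m * u^(m+p) := by
      have h1 : (x/u)^m * u^(m+p) = x^m * u^p := by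
        rw [div_pow, pow_add]
        field_simp
      rw [h1, pow_add]
      exact mul_le_mul_of_nonneg_left (pow_le_pow_left₀ hx0 hxu p) (pow_nonneg hx0 m)
    calc ((m+p+k).choose k : ℝ) * x^(m+p)
        ≤ ((m+p+k).choose k : ℝ) * ((x/u)^m * u^(m+p)) :=
          mul_le_mul_of_nonneg_left hxp ha
      _ = (x/u)^m * (((m+p+k).choose k : ℝ) * u^(m+p)) := by ring
  have hsum_f : Summable (fun p : ℕ => ((m+p+k).choose k : ℝ) * x^(m+p)) := by
    apply Summable.of_nonneg_of_le (fun p => by positivity) hterm (hshift.mul_left _)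
  have hT : (∑' p : ℕ, ((m+p+k).choose k : ℝ) * x^(m+p))
      ≤ (x/u)^m * (1/(1-u)^(k+1)) := by
    calc (∑' p : ℕ, ((m+p+k).choose k : ℝ) * x^(m+p))
        ≤ ∑' p : ℕ, (x/u)^m * (((m+p+k).choose k : ℝ) * u^(m+p)) :=
          Summable.tsum_le_tsum hterm hsum_f (hshift.mul_left _)
      _ = (x/u)^m * ∑' p : ℕ, ((m+p+k).choose k : ℝ) * u^(m+p) := tsum_mul_left
      _ ≤ (x/u)^m * ∑' q : ℕ, ((q+k).choose k : ℝ) * u^q := by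
          apply mul_le_mul_of_nonneg_left _ (by positivity)
          exact Summable.tsum_le_tsum_of_inj (fun p => m + p) (add_right_injective m)
            (fun c _ => by positivity) (fun p => le_rfl) hshift hfull.summable
      _ = (x/u)^m * (1/(1-u)^(k+1)) := by rw [hfull.tsum_eq]
  have hstep : (1 - x) ^ (k + 1) * (∑' p : ℕ, ((m+p+k).choose k : ℝ) * x^(m+p))
      ≤ ((1-x)/(1-u))^(k+1) * (x/u)^m := by
    have h := mul_le_mul_of_nonneg_left hT (pow_nonneg h1x (k+1))
    calc (1 - x) ^ (k + 1) * (∑' p : ℕ, ((m+p+k).choose k : ℝ) * x^(m+p))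
        ≤ (1 - x) ^ (k + 1) * ((x/u)^m * (1/(1-u)^(k+1))) := h
      _ = ((1-x)/(1-u))^(k+1) * (x/u)^m := by
          simp only [div_pow]
          ring
  refine hstep.trans ?_
  -- final log inequality
  set N : ℝ := (n:ℝ)
  set M : ℝ := (m:ℝ)
  set x0 : ℝ := M/N * (1-ε) with hx0def
  have h1ε : 0 < 1 - ε := by linarith
  have hx0pos : 0 < x0 := by
    rw [hx0def]; exact mul_pos (div_pos hMpos hNpos) h1ε
  have hxx0 : x ≤ x0 := hx1
  have hBpos : 0 < ((1-x)/(1-u))^(k+1) * (x/u)^m :=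
    mul_pos (pow_pos (div_pos h1x' h1u) _) (pow_pos (div_pos hxpos hu0) _)
  rw [← Real.log_le_iff_le_exp hBpos]
  rw [Real.log_mul (by positivity) (by positivity), Real.log_pow, Real.log_pow]
  -- basic facts
  have hE : ((k+1 : ℕ):ℝ) = N - M + 1 := by push_cast [hkc]; ring
  have hEpos : (0:ℝ) < N - M + 1 := by linarith
  have h1u_eq : 1 - u = (N - M + 1)/(N+1) := by
    rw [hu]
    field_simp
    ring
  have c1 : Real.log ((1-x)/(1-u)) ≤ (u - x)/(1-u) := by
    have h := Real.log_le_sub_one_of_pos (div_pos h1x' h1u)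
    rw [div_sub_one h1u.ne'] at h
    calc Real.log ((1-x)/(1-u)) ≤ (1 - x - (1-u))/(1-u) := h
      _ = (u - x)/(1-u) := by ring_nf
  have A1 : ((k+1 : ℕ):ℝ) * Real.log ((1-x)/(1-u)) ≤ M - (N+1)*x := by
    have hc : (0:ℝ) ≤ ((k+1 : ℕ):ℝ) := by rw [hE]; exact hEpos.le
    have h := mul_le_mul_of_nonneg_left c1 hc
    refine h.trans_eq ?_
    rw [hE, h1u_eq, hu]
    field_simp
  have c3 : Real.log (x/x0) ≤ x/x0 - 1 :=
    Real.log_le_sub_one_of_pos (div_pos hxpos hx0pos)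
  have hMx0 : (N+1) * x0 ≤ M := by
    have := mul_le_mul_of_nonneg_left hx0u (by linarith : (0:ℝ) ≤ N+1)
    rw [hu] at this
    calc (N+1) * x0 ≤ (N+1) * (M/(N+1)) := this
      _ = M := by field_simp
  have A2 : M * Real.log (x/x0) ≤ (N+1)*(x - x0) := by
    have h := mul_le_mul_of_nonneg_left c3 hMpos.le
    have h2 : M * (x/x0 - 1) = (M/x0) * (x - x0) := by field_simp
    have h3 : (N+1) ≤ M/x0 := by
      rw [le_div_iff₀ hx0pos]
      linarith
    have h4 : (M/x0) * (x - x0) ≤ (N+1) * (x - x0) :=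
      mul_le_mul_of_nonpos_right h3 (by linarith)
    calc M * Real.log (x/x0) ≤ M * (x/x0 - 1) := h
      _ = (M/x0) * (x - x0) := h2
      _ ≤ (N+1) * (x - x0) := h4
  have c4 : Real.log (x0/u) = Real.log (1-ε) + Real.log ((N+1)/N) := by
    have hxu_eq : x0/u = (1-ε) * ((N+1)/N) := by
      rw [hx0def, hu]
      field_simp
    rw [hxu_eq, Real.log_mul h1ε.ne' (by positivity)]
  have c5 : Real.log (1-ε) ≤ -ε - ε^2/2 := log_one_sub_le_aux15 hε0.le hε1
  have c6 : Real.log ((N+1)/N) ≤ 1/N := by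
    have h := Real.log_le_sub_one_of_pos (show (0:ℝ) < (N+1)/N by positivity)
    have : (N+1)/N - 1 = 1/N := by field_simp; ring
    linarith [this ▸ h]
  have c2 : Real.log (x/u) = Real.log (x/x0) + Real.log (x0/u) := by
    rw [← Real.log_mul (by positivity) (by positivity)]
    congr 1
    field_simp
  have A3 : M * Real.log (x/u) ≤ (N+1)*(x - x0) + M*(-ε - ε^2/2) + M*(1/N) := by
    rw [c2, c4, mul_add, mul_add]
    have h5 := mul_le_mul_of_nonneg_left c5 hMpos.le
    have h6 := mul_le_mul_of_nonneg_left c6 hMpos.le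
    linarith [A2]
  -- final arithmetic
  have hfinal : M - (N+1)*x0 + M*(-ε - ε^2/2) + M*(1/N) = M/N*ε - M*ε^2/2 := by
    rw [hx0def]
    field_simp
    ring
  have hRHS : M/N*ε - Real.log (M+1) = M/N*ε - M*ε^2/2 := by rw [hlogeq]
  calc ((k+1:ℕ):ℝ) * Real.log ((1-x)/(1-u)) + M * Real.log (x/u)
      ≤ (M - (N+1)*x) + ((N+1)*(x - x0) + M*(-ε - ε^2/2) + M*(1/N)) := by linarith [A1, A3]
    _ = M - (N+1)*x0 + M*(-ε - ε^2/2) + M*(1/N) := by ring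
    _ = M/N*ε - M*ε^2/2 := hfinal
    _ = M/N*ε - Real.log (M+1) := hRHS.symm
end
end

section
/- Let 1 ≤ m < n and let i ≥ 1 be an integer; set r_i = i/√(n-m+i²) and r_{i+1} = (i+1)/√(n-m+(i+1)²). Let K be the truncation kernel defined below. Then ∫_{{|z| < r_i}} ∫_{{r_{i+1} ≤ |w| ≤ 1}} |K(z,w)|² dλ(w) dλ(z) = ∑_{j=0}^{m-1} P_j · Q_j, where P_j = ∑_{ℓ=j+1}^{n-m+j} binom(n-m+j, ℓ)·r_i^{2ℓ}·(1-r_i²)^{n-m+j-ℓ} and Q_j = ∑_{ℓ=0}^{j} binom(n-m+j, ℓ)·r_{i+1}^{2ℓ}·(1-r_{i+1}²)^{n-m+j-ℓ}; that is, P_j = P[Binomial(n-m+j, r_i²) > j] and Q_j = P[Binomial(n-m+j, r_{i+1}²) ≤ j]. -/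
open MeasureTheory Matrix Finset

noncomputable section

/-- The normalizing constants `N_j = π (j-1)! (n-m-1)! / (n-m+j-1)!`. -/
def Nj (n m j : ℕ) : ℝ :=
  Real.pi * (Nat.factorial (j - 1)) * (Nat.factorial (n - m - 1)) /
    (Nat.factorial (n - m + j - 1))

/-- The correlation kernel of the eigenvalue process of the `m × m` truncation of an
`n × n` Haar unitary matrix. -/
def Ker (n m : ℕ) (z w : ℂ) : ℂ :=
  ∑ j ∈ Finset.Icc 1 m,
    (1 / (Nj n m j : ℂ)) * (z * (starRingEnd ℂ) w) ^ (j - 1) *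
      (((1 - ‖z‖ ^ 2) ^ (((n : ℝ) - m - 1) / 2) : ℝ) : ℂ) *
      (((1 - ‖w‖ ^ 2) ^ (((n : ℝ) - m - 1) / 2) : ℝ) : ℂ)


section Helpers

open Complex Set

lemma polar_master (T : Set ℝ) (hT : MeasurableSet T) (p q : ℕ) (f : ℝ → ℝ) :
    ∫ w in {w : ℂ | ‖w‖ ∈ T}, w ^ p * ((starRingEnd ℂ) w) ^ q * ((f (‖w‖) : ℝ) : ℂ)
    = (∫ r in T ∩ Set.Ioi (0:ℝ), ((r:ℂ) ^ (p + q + 1) * (f r : ℂ)))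
      * ∫ θ in Set.Ioo (-Real.pi) Real.pi, Complex.exp ((p - q : ℤ) * θ * Complex.I) := by
  set F : ℂ → ℂ := fun w => w ^ p * ((starRingEnd ℂ) w) ^ q * ((f (‖w‖) : ℝ) : ℂ) with hF
  have hmeas : MeasurableSet {w : ℂ | ‖w‖ ∈ T} :=
    hT.preimage continuous_norm.measurable
  rw [← integral_indicator hmeas, ← Complex.integral_comp_polarCoord_symm]
  have step1 : ∀ pt ∈ polarCoord.target,
      pt.1 • ({w : ℂ | ‖w‖ ∈ T}.indicator F) (Complex.polarCoord.symm pt)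
      = ((T ∩ Set.Ioi (0:ℝ)) ×ˢ (Set.Ioo (-Real.pi) Real.pi)).indicator
          (fun pt : ℝ × ℝ => ((pt.1:ℂ) ^ (p+q+1) * (f pt.1 : ℂ)) * Complex.exp ((p - q : ℤ) * pt.2 * Complex.I)) pt := by
    intro pt hpt
    rw [polarCoord_target] at hpt
    obtain ⟨hr, hθ⟩ := hpt
    have hr' : (0:ℝ) < pt.1 := hr
    have habs : ‖Complex.polarCoord.symm pt‖ = pt.1 := by
      rw [Complex.norm_polarCoord_symm, abs_of_pos hr']
    have hsymm : Complex.polarCoord.symm pt = (pt.1 : ℂ) * Complex.exp (pt.2 * Complex.I) := by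
      rw [Complex.polarCoord_symm_apply, Complex.exp_mul_I]
      push_cast
      ring
    by_cases hTmem : pt.1 ∈ T
    · rw [Set.indicator_of_mem (by rw [Set.mem_setOf_eq, habs]; exact hTmem),
        Set.indicator_of_mem (show pt ∈ (T ∩ Set.Ioi (0:ℝ)) ×ˢ (Set.Ioo (-Real.pi) Real.pi) from ⟨⟨hTmem, hr'⟩, hθ⟩)]
      rw [Complex.real_smul, hF]
      simp only [habs]
      rw [hsymm]
      have hconj : (starRingEnd ℂ) ((pt.1:ℂ) * Complex.exp ((pt.2:ℂ) * Complex.I))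
          = (pt.1:ℂ) * Complex.exp (-((pt.2:ℂ) * Complex.I)) := by
        simp only [_root_.map_mul, ← Complex.exp_conj, Complex.conj_I, Complex.conj_ofReal]
        ring_nf
      rw [hconj, mul_pow, mul_pow, ← Complex.exp_nat_mul, ← Complex.exp_nat_mul]
      have hexp : ((((p:ℤ) - q : ℤ) : ℂ)) * pt.2 * Complex.I
          = (p:ℂ) * ((pt.2:ℂ) * Complex.I) + (q:ℂ) * (-((pt.2:ℂ) * Complex.I)) := by
        push_cast; ring
      rw [hexp, Complex.exp_add]
      ring
    · rw [Set.indicator_of_notMem (by rw [Set.mem_setOf_eq, habs]; exact hTmem),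
        Set.indicator_of_notMem (fun h => hTmem h.1.1)]
      simp
  rw [setIntegral_congr_fun polarCoord.open_target.measurableSet step1]
  rw [setIntegral_indicator ((hT.inter measurableSet_Ioi).prod measurableSet_Ioo)]
  rw [Set.inter_eq_self_of_subset_right (by
    apply Set.prod_mono ?_ le_rfl
    exact fun r hr => hr.2)]
  rw [Measure.volume_eq_prod]
  exact setIntegral_prod_mul (fun r : ℝ => (r:ℂ) ^ (p + q + 1) * (f r : ℂ))
    (fun θ : ℝ => Complex.exp ((p - q : ℤ) * θ * Complex.I)) _ _

lemma ang_int (k : ℤ) : ∫ θ in Set.Ioo (-Real.pi) Real.pi, Complex.exp (k * θ * Complex.I)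
    = if k = 0 then (2 * Real.pi : ℝ) else 0 := by
  rcases eq_or_ne k 0 with hk | hk
  · subst hk
    rw [if_pos rfl]
    simp only [Int.cast_zero, zero_mul, Complex.exp_zero]
    rw [setIntegral_const, measureReal_def, Real.volume_Ioo]
    rw [ENNReal.toReal_ofReal (by linarith [Real.pi_pos])]
    rw [real_smul, Complex.ofReal_sub, Complex.ofReal_neg, mul_one]
    push_cast
    ring
  · rw [if_neg hk, Complex.ofReal_zero, ← integral_Ioc_eq_integral_Ioo,
      ← intervalIntegral.integral_of_le (by linarith [Real.pi_pos])]
    have : ∀ θ : ℝ, (k:ℂ) * θ * Complex.I = ((k:ℂ) * Complex.I) * θ := fun θ => by ring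
    simp_rw [this]
    rw [integral_exp_mul_complex (by simp [hk, Complex.I_ne_zero])]
    have h2 : (k:ℂ) * Complex.I * (Real.pi:ℂ)
        = (k:ℂ) * Complex.I * ((-Real.pi : ℝ):ℂ) + k * (2 * Real.pi * Complex.I) := by
      push_cast; ring
    rw [h2, Complex.exp_add, Complex.exp_int_mul_two_pi_mul_I, mul_one, sub_self, zero_div]

def BB (M j : ℕ) (x : ℝ) : ℝ :=
  ∑ ℓ ∈ Finset.range (j+1), (M.choose ℓ : ℝ) * x^(2*ℓ) * (1-x^2)^(M-ℓ)

lemma hasDerivAt_BB (M j : ℕ) (x : ℝ) :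
    HasDerivAt (BB M j)
      (-(((2*(M-j)*(M.choose j) : ℕ) : ℝ) * x^(2*j+1) * (1-x^2)^(M-j-1))) x := by
  have hterm : ∀ ℓ : ℕ, HasDerivAt (fun x : ℝ => (M.choose ℓ : ℝ) * x^(2*ℓ) * (1-x^2)^(M-ℓ))
      ((M.choose ℓ : ℝ) * (((2*ℓ : ℕ):ℝ) * x^(2*ℓ-1) * (1-x^2)^(M-ℓ)
        + x^(2*ℓ) * (((M-ℓ:ℕ):ℝ) * (1-x^2)^(M-ℓ-1) * (-(2*x))))) x := by
    intro ℓ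
    have h1 : HasDerivAt (fun x : ℝ => x^(2*ℓ)) (((2*ℓ:ℕ):ℝ) * x^(2*ℓ-1)) x :=
      hasDerivAt_pow (2*ℓ) x
    have hin : HasDerivAt (fun x : ℝ => 1 - x^2) (-(2*x)) x := by
      have := (hasDerivAt_pow 2 x).const_sub 1
      simpa using this
    have h2 : HasDerivAt (fun x : ℝ => (1-x^2)^(M-ℓ))
        (((M-ℓ:ℕ):ℝ) * (1-x^2)^(M-ℓ-1) * (-(2*x))) x := by
      have := (hasDerivAt_pow (M-ℓ) (1-x^2)).comp x hin
      simpa [mul_assoc, Function.comp_def] using this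
    have := ((h1.const_mul ((M.choose ℓ : ℝ))).fun_mul h2)
    exact this.congr_deriv (by ring)
  have hsum : HasDerivAt (fun y : ℝ => ∑ ℓ ∈ Finset.range (j+1),
        (M.choose ℓ : ℝ) * y^(2*ℓ) * (1-y^2)^(M-ℓ))
      (∑ ℓ ∈ Finset.range (j+1), (M.choose ℓ : ℝ) * (((2*ℓ : ℕ):ℝ) * x^(2*ℓ-1) * (1-x^2)^(M-ℓ)
        + x^(2*ℓ) * (((M-ℓ:ℕ):ℝ) * (1-x^2)^(M-ℓ-1) * (-(2*x))))) x :=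
    HasDerivAt.fun_sum (fun ℓ _ => hterm ℓ)
  show HasDerivAt (fun y : ℝ => ∑ ℓ ∈ Finset.range (j+1),
      (M.choose ℓ : ℝ) * y^(2*ℓ) * (1-y^2)^(M-ℓ)) _ x
  convert hsum using 1
  symm
  -- algebraic identity
  set u : ℕ → ℝ := fun ℓ => (M.choose ℓ : ℝ) * (((2*ℓ : ℕ):ℝ) * x^(2*ℓ-1) * (1-x^2)^(M-ℓ)) with hu
  set v : ℕ → ℝ := fun ℓ => ((2*(M-ℓ)*(M.choose ℓ) : ℕ) : ℝ) * x^(2*ℓ+1) * (1-x^2)^(M-ℓ-1) with hv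
  have hsplit : ∀ ℓ, (M.choose ℓ : ℝ) * (((2*ℓ : ℕ):ℝ) * x^(2*ℓ-1) * (1-x^2)^(M-ℓ)
        + x^(2*ℓ) * (((M-ℓ:ℕ):ℝ) * (1-x^2)^(M-ℓ-1) * (-(2*x)))) = u ℓ - v ℓ := by
    intro ℓ
    rw [hu, hv]
    push_cast
    ring_nf
  rw [Finset.sum_congr rfl (fun ℓ _ => hsplit ℓ), Finset.sum_sub_distrib]
  have huv : ∀ ℓ, u (ℓ+1) = v ℓ := by
    intro ℓ
    rw [hu, hv]
    have hc : (M.choose (ℓ+1) * (ℓ+1) : ℕ) = M.choose ℓ * (M - ℓ) := Nat.choose_succ_right_eq M ℓ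
    have hn : M.choose (ℓ+1) * (2*(ℓ+1)) = 2*(M-ℓ)*(M.choose ℓ) := by
      calc M.choose (ℓ+1) * (2*(ℓ+1)) = 2 * (M.choose (ℓ+1) * (ℓ+1)) := by ring
        _ = 2 * (M.choose ℓ * (M-ℓ)) := by rw [hc]
        _ = 2*(M-ℓ)*(M.choose ℓ) := by ring
    have : ((M.choose (ℓ+1) : ℕ) : ℝ) * ((2*(ℓ+1) : ℕ) : ℝ) = ((2*(M-ℓ)*(M.choose ℓ) : ℕ) : ℝ) := by
      rw [← Nat.cast_mul, hn]
    have he1 : 2*(ℓ+1)-1 = 2*ℓ+1 := by omega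
    have he2 : M - (ℓ+1) = M - ℓ - 1 := by omega
    simp only [he1, he2]
    rw [← this]
    ring
  have hu0 : u 0 = 0 := by simp [hu]
  rw [Finset.sum_range_succ' u, Finset.sum_range_succ v, hu0, add_zero]
  rw [Finset.sum_congr rfl (fun ℓ _ => huv ℓ)]
  ring

lemma BB_zero (M j : ℕ) : BB M j 0 = 1 := by
  rw [BB, Finset.sum_eq_single 0]
  · simp
  · intro ℓ _ hℓ
    have : 2*ℓ ≠ 0 := by omega
    simp [zero_pow this]
  · simp

lemma BB_one (M j : ℕ) (hj : j < M) : BB M j 1 = 0 := by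
  rw [BB]
  apply Finset.sum_eq_zero
  intro ℓ hℓ
  rw [Finset.mem_range] at hℓ
  have : M - ℓ ≠ 0 := by omega
  simp [zero_pow this]

lemma radial_eval (Nn j : ℕ) (hN : 1 ≤ Nn) (a b : ℝ) (hab : a ≤ b) :
    ∫ r in a..b, r^(2*j+1) * (1-r^2)^(Nn-1)
      = (BB (Nn+j) j a - BB (Nn+j) j b) / (2*Nn*((Nn+j).choose j)) := by
  set c : ℝ := ((2*((Nn+j)-j)*((Nn+j).choose j) : ℕ) : ℝ) with hc
  have hderiv : ∀ x ∈ Set.uIcc a b, HasDerivAt (BB (Nn+j) j)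
      (-(c * x^(2*j+1) * (1-x^2)^(Nn-1))) x := by
    intro x _
    have := hasDerivAt_BB (Nn+j) j x
    have he : (Nn+j)-j-1 = Nn-1 := by omega
    rwa [he] at this
  have hcont : Continuous fun x : ℝ => -(c * x^(2*j+1) * (1-x^2)^(Nn-1)) := by continuity
  have hint := intervalIntegral.integral_eq_sub_of_hasDerivAt hderiv
    (hcont.intervalIntegrable a b)
  have hcpos : (0:ℝ) < c := by
    rw [hc]
    have h1 : 0 < 2*((Nn+j)-j)*((Nn+j).choose j) :=
      Nat.mul_pos (Nat.mul_pos (by norm_num) (by omega)) (Nat.choose_pos (by omega))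
    exact_mod_cast h1
  have hlin : ∫ x in a..b, -(c * x^(2*j+1) * (1-x^2)^(Nn-1))
      = -c * ∫ x in a..b, x^(2*j+1) * (1-x^2)^(Nn-1) := by
    rw [← intervalIntegral.integral_const_mul]
    congr 1; ext x; ring
  rw [hlin] at hint
  have hc2 : c = 2*Nn*((Nn+j).choose j) := by
    rw [hc]
    have : (Nn+j)-j = Nn := by omega
    rw [this]
    push_cast; ring
  rw [eq_div_iff (by rw [← hc2]; exact ne_of_gt hcpos), ← hc2, mul_comm]
  linarith [hint]

lemma radial_final (Nn j : ℕ) (hN : 1 ≤ Nn) (a b : ℝ) (hab : a ≤ b) :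
    ∫ r in Set.Ioo a b, ((r:ℂ)^(2*j+1) * (((1-r^2)^(Nn-1) : ℝ) : ℂ))
      = (((BB (Nn+j) j a - BB (Nn+j) j b) / (2*Nn*((Nn+j).choose j)) : ℝ) : ℂ) := by
  have h1 : ∀ r : ℝ, (r:ℂ)^(2*j+1) * (((1-r^2)^(Nn-1) : ℝ) : ℂ)
      = ((r^(2*j+1) * (1-r^2)^(Nn-1) : ℝ) : ℂ) := by
    intro r; push_cast; ring
  simp_rw [h1]
  have h2 := radial_eval Nn j hN a b hab
  rw [intervalIntegral.integral_of_le hab, MeasureTheory.integral_Ioc_eq_integral_Ioo] at h2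
  rw [← h2]
  exact integral_ofReal

lemma sq_rpow (Nn : ℕ) (hN : 1 ≤ Nn) (x : ℝ) (hx : 0 ≤ x) :
    (x ^ (((Nn:ℝ) - 1)/2)) ^ 2 = x ^ (Nn - 1) := by
  have h1 : ((Nn:ℝ) - 1) = ((Nn - 1 : ℕ) : ℝ) := by
    have : (1:ℝ) ≤ (Nn:ℝ) := by exact_mod_cast hN
    rw [Nat.cast_sub hN]; norm_num
  rw [← Real.rpow_natCast (x ^ (((Nn:ℝ) - 1)/2)) 2, ← Real.rpow_mul hx,
    show ((Nn:ℝ)-1)/2 * ((2:ℕ):ℝ) = ((Nn:ℝ)-1) by push_cast; ring, h1, Real.rpow_natCast]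

/-- fK -/
def fK (Nn : ℕ) (t : ℝ) : ℝ := ((1 - t^2) ^ (((Nn:ℝ) - 1)/2)) ^ 2

lemma fK_cont (Nn : ℕ) (hN : 1 ≤ Nn) : Continuous (fK Nn) := by
  apply Continuous.pow
  apply Continuous.rpow_const (by continuity)
  intro x
  right
  have : (1:ℝ) ≤ (Nn:ℝ) := by exact_mod_cast hN
  linarith

lemma annulus_int (Nn : ℕ) (hN : 1 ≤ Nn) (p q : ℕ) (a : ℝ) (ha : 0 < a) (ha1 : a ≤ 1) :
    ∫ w in {w : ℂ | a ≤ ‖w‖ ∧ ‖w‖ ≤ 1},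
        w ^ p * ((starRingEnd ℂ) w) ^ q * ((fK Nn (‖w‖) : ℝ) : ℂ)
    = if p = q then (((BB (Nn+p) p a) / (2*Nn*((Nn+p).choose p)) * (2*Real.pi) : ℝ) : ℂ)
      else 0 := by
  have hset : {w : ℂ | a ≤ ‖w‖ ∧ ‖w‖ ≤ 1}
      = {w : ℂ | ‖w‖ ∈ Set.Icc a 1} := rfl
  rw [hset, polar_master _ measurableSet_Icc]
  have hTI : Set.Icc a 1 ∩ Set.Ioi (0:ℝ) = Set.Icc a 1 :=
    Set.inter_eq_self_of_subset_left (fun r hr => lt_of_lt_of_le ha hr.1)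
  rw [hTI]
  rcases eq_or_ne p q with hpq | hpq
  · subst hpq
    rw [ang_int, if_pos (by ring), if_pos rfl]
    have hrad : ∫ r in Set.Icc a 1, ((r:ℂ) ^ (p + p + 1) * ((fK Nn r : ℝ) : ℂ))
        = (((BB (Nn+p) p a) / (2*Nn*((Nn+p).choose p)) : ℝ) : ℂ) := by
      rw [integral_Icc_eq_integral_Ioc, integral_Ioc_eq_integral_Ioo]
      rw [setIntegral_congr_fun measurableSet_Ioo (g := fun r : ℝ =>
          ((r:ℂ)^(2*p+1) * (((1-r^2)^(Nn-1) : ℝ) : ℂ)))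
        (fun r hr => by
          have h1 : (0:ℝ) ≤ 1 - r^2 := by
            obtain ⟨h2, h3⟩ := hr
            nlinarith [ha.le.trans h2.le]
          rw [fK, sq_rpow Nn hN _ h1, show p + p + 1 = 2*p+1 by ring])]
      rw [radial_final Nn p hN a 1 ha1, BB_one (Nn+p) p (by omega), sub_zero]
    rw [hrad, ← Complex.ofReal_mul]
  · rw [ang_int, if_neg (by
      intro h
      exact hpq (by exact_mod_cast sub_eq_zero.mp h)), if_neg hpq, Complex.ofReal_zero, mul_zero]

lemma ball_int (Nn : ℕ) (hN : 1 ≤ Nn) (p q : ℕ) (b : ℝ) (hb0 : 0 ≤ b) (hb1 : b ≤ 1) :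
    ∫ z in {z : ℂ | ‖z‖ < b},
        z ^ p * ((starRingEnd ℂ) z) ^ q * ((fK Nn (‖z‖) : ℝ) : ℂ)
    = if p = q then (((1 - BB (Nn+p) p b) / (2*Nn*((Nn+p).choose p)) * (2*Real.pi) : ℝ) : ℂ)
      else 0 := by
  have hset : {z : ℂ | ‖z‖ < b} = {z : ℂ | ‖z‖ ∈ Set.Iio b} := rfl
  rw [hset, polar_master _ measurableSet_Iio]
  have hTI : Set.Iio b ∩ Set.Ioi (0:ℝ) = Set.Ioo 0 b := by
    rw [Set.inter_comm, Set.Ioi_inter_Iio]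
  rw [hTI]
  rcases eq_or_ne p q with hpq | hpq
  · subst hpq
    rw [ang_int, if_pos (by ring), if_pos rfl]
    have hrad : ∫ r in Set.Ioo 0 b, ((r:ℂ) ^ (p + p + 1) * ((fK Nn r : ℝ) : ℂ))
        = (((1 - BB (Nn+p) p b) / (2*Nn*((Nn+p).choose p)) : ℝ) : ℂ) := by
      rw [setIntegral_congr_fun measurableSet_Ioo (g := fun r : ℝ =>
          ((r:ℂ)^(2*p+1) * (((1-r^2)^(Nn-1) : ℝ) : ℂ)))
        (fun r hr => by
          have h1 : (0:ℝ) ≤ 1 - r^2 := by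
            obtain ⟨h2, h3⟩ := hr
            nlinarith [h3.le.trans hb1]
          rw [fK, sq_rpow Nn hN _ h1, show p + p + 1 = 2*p+1 by ring])]
      rw [radial_final Nn p hN 0 b hb0, BB_zero]
    rw [hrad, ← Complex.ofReal_mul]
  · rw [ang_int, if_neg (by
      intro h
      exact hpq (by exact_mod_cast sub_eq_zero.mp h)), if_neg hpq, Complex.ofReal_zero, mul_zero]

lemma ker_expand (n m : ℕ) (hmn : m ≤ n) (z w : ℂ) :
    Ker n m z w * (starRingEnd ℂ) (Ker n m z w)
    = ∑ j ∈ Finset.Icc 1 m, ∑ k ∈ Finset.Icc 1 m,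
        (((1/Nj n m j) * (1/Nj n m k) : ℝ) : ℂ)
        * (z^(j-1) * ((starRingEnd ℂ) z)^(k-1) * ((fK (n-m) (‖z‖) : ℝ):ℂ))
        * (w^(k-1) * ((starRingEnd ℂ) w)^(j-1) * ((fK (n-m) (‖w‖) : ℝ):ℂ)) := by
  have hcast : ((n:ℝ) - m - 1)/2 = (((n-m : ℕ):ℝ) - 1)/2 := by rw [Nat.cast_sub hmn]
  rw [Ker, map_sum, Finset.sum_mul_sum]
  refine Finset.sum_congr rfl fun j hj => Finset.sum_congr rfl fun k hk => ?_
  simp only [_root_.map_mul, map_pow, map_div₀, _root_.map_one, Complex.conj_ofReal, Complex.conj_conj]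
  simp only [fK, ← hcast]
  push_cast
  ring

lemma tail_sum (M jj : ℕ) (hj : jj ≤ M) (x : ℝ) :
    ∑ ℓ ∈ Finset.Icc (jj+1) M, (M.choose ℓ : ℝ) * x^(2*ℓ) * (1-x^2)^(M-ℓ)
      = 1 - BB M jj x := by
  have hbinom : ∑ ℓ ∈ Finset.range (M+1), (M.choose ℓ : ℝ) * x^(2*ℓ) * (1-x^2)^(M-ℓ) = 1 := by
    calc ∑ ℓ ∈ Finset.range (M+1), (M.choose ℓ : ℝ) * x^(2*ℓ) * (1-x^2)^(M-ℓ)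
        = (x^2 + (1-x^2))^M := by
          rw [add_pow]
          refine Finset.sum_congr rfl fun ℓ _ => ?_
          rw [← pow_mul]
          ring
      _ = 1 := by norm_num
  have hsplit : ∑ ℓ ∈ Finset.range (jj+1), (M.choose ℓ : ℝ) * x^(2*ℓ) * (1-x^2)^(M-ℓ)
      + ∑ ℓ ∈ Finset.Ico (jj+1) (M+1), (M.choose ℓ : ℝ) * x^(2*ℓ) * (1-x^2)^(M-ℓ)
      = ∑ ℓ ∈ Finset.range (M+1), (M.choose ℓ : ℝ) * x^(2*ℓ) * (1-x^2)^(M-ℓ) := by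
    rw [Finset.range_eq_Ico, Finset.range_eq_Ico]
    exact Finset.sum_Ico_consecutive (fun ℓ => (M.choose ℓ : ℝ) * x^(2*ℓ) * (1-x^2)^(M-ℓ)) (m := 0) (n := jj+1) (k := M+1) (by omega) (by omega)
  have hIcc : Finset.Icc (jj+1) M = Finset.Ico (jj+1) (M+1) := by
    rw [Finset.Ico_add_one_right_eq_Icc]
  rw [hIcc, BB]
  rw [hbinom] at hsplit
  linarith

lemma Nj_mul (n m j : ℕ) (hm : 1 ≤ j) (hmn : m < n) :
    Nj n m j * ((n - m : ℕ) * (((n-m) + (j-1)).choose (j-1))) = Real.pi := by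
  set N := n - m with hNdef
  have hN : 1 ≤ N := by omega
  have hfac : (N + (j-1)).choose (j-1) * (j-1).factorial * (N * (N-1).factorial)
      = (N + (j-1)).factorial := by
    have h1 : N * (N-1).factorial = N.factorial := Nat.mul_factorial_pred (by omega)
    rw [h1]
    have := Nat.choose_mul_factorial_mul_factorial (show (j-1) ≤ N + (j-1) by omega)
    rw [show N + (j-1) - (j-1) = N by omega] at this
    rw [mul_assoc, mul_comm (j-1).factorial N.factorial, ← mul_assoc] at this ⊢
    exact this
  rw [Nj]
  have e1 : n - m - 1 = N - 1 := rfl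
  have e2 : n - m + j - 1 = N + (j - 1) := by omega
  rw [e1, e2]
  have hne : ((N + (j-1)).factorial : ℝ) ≠ 0 := by exact_mod_cast Nat.factorial_ne_zero (N + (j-1))
  field_simp
  rw [← hfac]
  push_cast
  ring

lemma rr_pos (n m i : ℕ) (hmn : m < n) (hi : 1 ≤ i) : 0 < rr n m i := by
  have h1 : (m:ℝ) < n := by exact_mod_cast hmn
  have hpos : (0:ℝ) < (n : ℝ) - m + (i : ℝ) ^ 2 := by nlinarith [sq_nonneg ((i:ℝ))]
  exact div_pos (by exact_mod_cast hi) (Real.sqrt_pos.mpr hpos)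

lemma rr_lt_one (n m i : ℕ) (hmn : m < n) : rr n m i < 1 := by
  have h1 : (m:ℝ) < n := by exact_mod_cast hmn
  have hpos : (0:ℝ) < (n : ℝ) - m + (i : ℝ) ^ 2 := by nlinarith [sq_nonneg ((i:ℝ))]
  rw [rr, div_lt_one (Real.sqrt_pos.mpr hpos)]
  calc (i:ℝ) = Real.sqrt ((i:ℝ)^2) := by rw [Real.sqrt_sq (by positivity)]
    _ < Real.sqrt ((n : ℝ) - m + (i : ℝ) ^ 2) := by
        apply Real.sqrt_lt_sqrt (by positivity)
        linarith


end Helpers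

open Complex Set

theorem stmt18 (n m : ℕ) (hm : 1 ≤ m) (hmn : m < n) (i : ℕ) (hi : 1 ≤ i) :
    (∫ z in {z : ℂ | ‖z‖ < rr n m i},
        ∫ w in {w : ℂ | rr n m (i + 1) ≤ ‖w‖ ∧ ‖w‖ ≤ 1},
          (‖Ker n m z w‖) ^ 2 ∂volume ∂volume)
      = ∑ j ∈ Finset.range m,
          (∑ ℓ ∈ Finset.Icc (j + 1) (n - m + j),
            (Nat.choose (n - m + j) ℓ : ℝ) * rr n m i ^ (2 * ℓ) *
              (1 - rr n m i ^ 2) ^ (n - m + j - ℓ)) *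
          (∑ ℓ ∈ Finset.range (j + 1),
            (Nat.choose (n - m + j) ℓ : ℝ) * rr n m (i + 1) ^ (2 * ℓ) *
              (1 - rr n m (i + 1) ^ 2) ^ (n - m + j - ℓ)) := by
  have hN1 : 1 ≤ n - m := by omega
  set b := rr n m i with hbdef
  set a := rr n m (i+1) with hadef
  have hb0 : 0 < b := rr_pos n m i hmn hi
  have hb1 : b < 1 := rr_lt_one n m i hmn
  have ha0 : 0 < a := rr_pos n m (i+1) hmn (by omega)
  have ha1 : a < 1 := rr_lt_one n m (i+1) hmn
  set Sz : Set ℂ := {z : ℂ | ‖z‖ < b} with hSz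
  set Sw : Set ℂ := {w : ℂ | a ≤ ‖w‖ ∧ ‖w‖ ≤ 1} with hSw
  -- measurability / compactness
  have hSwClosed : IsClosed Sw := by
    have : Sw = (fun w : ℂ => ‖w‖) ⁻¹' (Set.Icc a 1) := rfl
    rw [this]; exact isClosed_Icc.preimage continuous_norm
  have hSwm : MeasurableSet Sw := hSwClosed.measurableSet
  have hSzm : MeasurableSet Sz := by
    have : Sz = (fun w : ℂ => ‖w‖) ⁻¹' (Set.Iio b) := rfl
    rw [this]; exact (isOpen_Iio.preimage continuous_norm).measurableSet
  have hSwCpt : IsCompact Sw := by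
    refine IsCompact.of_isClosed_subset (isCompact_closedBall (0:ℂ) 1) hSwClosed ?_
    intro w hw
    simpa [Metric.mem_closedBall, Complex.dist_eq] using hw.2
  have hcont : ∀ p q : ℕ, Continuous (fun w : ℂ =>
      w ^ p * ((starRingEnd ℂ) w) ^ q * ((fK (n-m) (‖w‖) : ℝ) : ℂ)) := by
    intro p q
    exact ((continuous_pow p).mul (Complex.continuous_conj.pow q)).mul
      (Complex.continuous_ofReal.comp ((fK_cont _ hN1).comp continuous_norm))
  have hbasew : ∀ p q : ℕ, IntegrableOn (fun w : ℂ =>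
      w ^ p * ((starRingEnd ℂ) w) ^ q * ((fK (n-m) (‖w‖) : ℝ) : ℂ)) Sw volume :=
    fun p q => (hcont p q).continuousOn.integrableOn_compact hSwCpt
  have hbasez : ∀ p q : ℕ, IntegrableOn (fun z : ℂ =>
      z ^ p * ((starRingEnd ℂ) z) ^ q * ((fK (n-m) (‖z‖) : ℝ) : ℂ)) Sz volume := by
    intro p q
    refine ((hcont p q).continuousOn.integrableOn_compact
      (isCompact_closedBall (0:ℂ) b)).mono_set ?_
    intro z hz
    simpa [Metric.mem_closedBall, Complex.dist_eq] using le_of_lt hz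
  -- the collapsed inner value coefficient
  set W : ℕ → ℂ := fun j => (((1/Nj n m j) * (1/Nj n m j)
      * (BB ((n-m)+(j-1)) (j-1) a / (2*((n - m : ℕ) : ℝ)*(((n-m)+(j-1)).choose (j-1))) * (2*Real.pi)) : ℝ) : ℂ)
    with hW
  have hinner : ∀ z : ℂ, (∫ w in Sw, Ker n m z w * (starRingEnd ℂ) (Ker n m z w))
      = ∑ j ∈ Finset.Icc 1 m, W j *
          (z^(j-1) * ((starRingEnd ℂ) z)^(j-1) * ((fK (n-m) (‖z‖) : ℝ):ℂ)) := by
    intro z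
    rw [setIntegral_congr_fun hSwm (fun w _ => ker_expand n m hmn.le z w)]
    rw [integral_finset_sum _ (fun j _ => integrable_finset_sum _ (fun k _ =>
      ((hbasew (k-1) (j-1)).const_mul _)))]
    refine Finset.sum_congr rfl fun j hj => ?_
    rw [integral_finset_sum _ (fun k _ => ((hbasew (k-1) (j-1)).const_mul _))]
    rw [Finset.sum_eq_single j]
    · rw [integral_const_mul, annulus_int (n-m) hN1 (j-1) (j-1) a ha0 ha1.le, if_pos rfl]
      rw [hW]
      push_cast
      ring
    · intro k hk hkj
      rw [integral_const_mul, annulus_int (n-m) hN1 (k-1) (j-1) a ha0 ha1.le,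
        if_neg (by
          rw [Finset.mem_Icc] at hj hk
          intro h
          exact hkj (by omega)), mul_zero]
    · intro hj'
      exact absurd hj hj'
  -- reduce to ℂ
  suffices h : ((∫ z in Sz, ∫ w in Sw, (‖Ker n m z w‖) ^ 2 : ℝ) : ℂ)
      = ((∑ j ∈ Finset.range m,
          (∑ ℓ ∈ Finset.Icc (j + 1) (n - m + j),
            (Nat.choose (n - m + j) ℓ : ℝ) * b ^ (2 * ℓ) * (1 - b ^ 2) ^ (n - m + j - ℓ)) *
          (∑ ℓ ∈ Finset.range (j + 1),
            (Nat.choose (n - m + j) ℓ : ℝ) * a ^ (2 * ℓ) * (1 - a ^ 2) ^ (n - m + j - ℓ)) : ℝ) : ℂ) by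
    exact_mod_cast h
  calc ((∫ z in Sz, ∫ w in Sw, (‖Ker n m z w‖) ^ 2 : ℝ) : ℂ)
      = ∫ z in Sz, ((∫ w in Sw, (‖Ker n m z w‖) ^ 2 : ℝ) : ℂ) :=
        (integral_ofReal).symm
    _ = ∫ z in Sz, ∫ w in Sw, Ker n m z w * (starRingEnd ℂ) (Ker n m z w) := by
        refine setIntegral_congr_fun hSzm (fun z _ => ?_)
        rw [show ((∫ w in Sw, (‖Ker n m z w‖) ^ 2 : ℝ) : ℂ)
            = ∫ w in Sw, (((‖Ker n m z w‖) ^ 2 : ℝ) : ℂ) from (integral_ofReal).symm]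
        refine setIntegral_congr_fun hSwm (fun w _ => ?_)
        rw [Complex.sq_norm, Complex.mul_conj]
    _ = ∫ z in Sz, ∑ j ∈ Finset.Icc 1 m, W j *
          (z^(j-1) * ((starRingEnd ℂ) z)^(j-1) * ((fK (n-m) (‖z‖) : ℝ):ℂ)) := by
        exact setIntegral_congr_fun hSzm (fun z _ => hinner z)
    _ = ∑ j ∈ Finset.Icc 1 m, W j *
          (((1 - BB ((n-m)+(j-1)) (j-1) b) / (2*((n - m : ℕ) : ℝ)*(((n-m)+(j-1)).choose (j-1)))
            * (2*Real.pi) : ℝ) : ℂ) := by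
        rw [integral_finset_sum _ (fun j _ => ((hbasez (j-1) (j-1)).const_mul _))]
        refine Finset.sum_congr rfl fun j hj => ?_
        rw [integral_const_mul, ball_int (n-m) hN1 (j-1) (j-1) b hb0.le hb1.le, if_pos rfl]
    _ = ((∑ j ∈ Finset.Icc 1 m, ((1/Nj n m j) * (1/Nj n m j)
          * (BB ((n-m)+(j-1)) (j-1) a / (2*((n - m : ℕ) : ℝ)*(((n-m)+(j-1)).choose (j-1))) * (2*Real.pi))
          * ((1 - BB ((n-m)+(j-1)) (j-1) b) / (2*((n - m : ℕ) : ℝ)*(((n-m)+(j-1)).choose (j-1)))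
            * (2*Real.pi)) : ℝ) : ℂ)) := by
        exact Finset.sum_congr rfl fun j hj => by rw [hW]; push_cast; ring
    _ = _ := by
        rw [Complex.ofReal_sum]
        refine Finset.sum_bij' (fun (j : ℕ) _ => j - 1) (fun (k : ℕ) _ => k + 1)
          (fun j hj => by
            rw [Finset.mem_Icc] at hj
            show j - 1 ∈ Finset.range m
            exact Finset.mem_range.mpr (by omega))
          (fun k hk => by
            rw [Finset.mem_range] at hk
            show k + 1 ∈ Finset.Icc 1 m
            exact Finset.mem_Icc.mpr (by omega))
          (fun j hj => by
            rw [Finset.mem_Icc] at hj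
            show j - 1 + 1 = j
            omega)
          (fun k hk => by show k + 1 - 1 = k; omega)
          (fun j hj => ?_)
        refine Complex.ofReal_inj.mpr ?_
        rw [Finset.mem_Icc] at hj
        obtain ⟨hj1, hj2⟩ := hj
        rw [tail_sum (n-m+(j-1)) (j-1) (by omega) b]
        rw [show (∑ ℓ ∈ Finset.range ((j-1) + 1),
            ((n - m + (j-1)).choose ℓ : ℝ) * a ^ (2 * ℓ) * (1 - a ^ 2) ^ (n - m + (j-1) - ℓ))
          = BB ((n-m)+(j-1)) (j-1) a from rfl]
        -- scalar identity
        have hD := Nj_mul n m j (by omega) hmn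
        have hCpos : (0:ℝ) < (((n-m) + (j-1)).choose (j-1) : ℕ) := by
          exact_mod_cast Nat.choose_pos (by omega)
        have hNpos : (0:ℝ) < ((n-m:ℕ):ℝ) := by exact_mod_cast (by omega : 0 < n - m)
        have hNj : Nj n m j = 2*Real.pi / (2*((n-m:ℕ):ℝ)*((((n-m)+(j-1)).choose (j-1) : ℕ):ℝ)) := by
          rw [eq_div_iff (by positivity)]
          push_cast at hD ⊢
          linarith [hD]
        rw [hNj]
        have hne : (2*((n-m:ℕ):ℝ)*((((n-m)+(j-1)).choose (j-1) : ℕ):ℝ)) ≠ 0 := by positivity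
        have hpine : (2*Real.pi) ≠ 0 := by
          have := Real.pi_pos; positivity
        field_simp
end
end
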